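/- For h > 0 let a₀(h) be the unique real number with 0 ≤ a₀(h) < π and a₀(h)·sin(a₀(h)/2) = hπ·cos(a₀(h)/2). Then a₀(h)/√(2πh) tends to 1 as h tends to 0 from the right. -/

import Mathlib

open Real Filter

lemma tan_div_self_tendsto :
    Filter.Tendsto (fun x : ℝ => Real.tan x / x) (nhdsWithin 0 {(0:ℝ)}ᶜ) (nhds 1) := by
  have h : HasDerivAt Real.tan 1 0 := by
    have := Real.hasDerivAt_tan (x := 0) (by simp)
    simpa using this
  have := hasDerivAt_iff_tendsto_slope.mp h
  refine this.congr fun x => ?_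
  simp [slope_def_field, div_eq_mul_inv]

theorem stmt_17 (a₀ : ℝ → ℝ)
    (ha : ∀ h : ℝ, 0 < h → 0 ≤ a₀ h ∧ a₀ h < π ∧
      a₀ h * Real.sin (a₀ h / 2) = h * π * Real.cos (a₀ h / 2)) :
    Filter.Tendsto (fun h : ℝ => a₀ h / Real.sqrt (2 * π * h))
      (nhdsWithin 0 (Set.Ioi 0)) (nhds 1) := by
  have hpi := Real.pi_pos
  have key : ∀ h : ℝ, 0 < h → 0 < a₀ h ∧ a₀ h ≤ π * Real.sqrt h ∧
      h * π = a₀ h * Real.tan (a₀ h / 2) := by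
    intro h hh
    obtain ⟨h0, hlt, heq⟩ := ha h hh
    have hcos : 0 < Real.cos (a₀ h / 2) :=
      Real.cos_pos_of_mem_Ioo ⟨by linarith, by linarith⟩
    have hane : 0 < a₀ h := by
      rcases h0.lt_or_eq with h' | h'
      · exact h'
      · exfalso
        rw [← h'] at heq
        simp at heq
        rcases heq with h'' | h'' <;> linarith
    have hsin : a₀ h / π ≤ Real.sin (a₀ h / 2) := by
      have := Real.mul_le_sin (x := a₀ h / 2) (by positivity) (by linarith)
      calc a₀ h / π = 2 / π * (a₀ h / 2) := by ring
        _ ≤ _ := this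
    have hcos1 : Real.cos (a₀ h / 2) ≤ 1 := Real.cos_le_one _
    have hsq : a₀ h ^ 2 ≤ π ^ 2 * h := by
      have e1 : a₀ h * (a₀ h / π) ≤ a₀ h * Real.sin (a₀ h / 2) :=
        mul_le_mul_of_nonneg_left hsin hane.le
      have e2 : h * π * Real.cos (a₀ h / 2) ≤ h * π * 1 :=
        mul_le_mul_of_nonneg_left hcos1 (by positivity)
      have e4 : a₀ h * (a₀ h / π) ≤ h * π := by linarith
      have e5 := mul_le_mul_of_nonneg_right e4 hpi.le
      have e6 : a₀ h * (a₀ h / π) * π = a₀ h ^ 2 := by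
        field_simp
      nlinarith [e5, e6]
    have hbound : a₀ h ≤ π * Real.sqrt h := by
      have := Real.sqrt_le_sqrt hsq
      rwa [Real.sqrt_sq h0, Real.sqrt_mul (by positivity), Real.sqrt_sq hpi.le] at this
    have htan : h * π = a₀ h * Real.tan (a₀ h / 2) := by
      rw [Real.tan_eq_sin_div_cos]
      field_simp
      linarith [heq]
    exact ⟨hane, hbound, htan⟩
  -- a₀ h / 2 tends to 0 within Ioi 0
  have h1 : Filter.Tendsto (fun h : ℝ => a₀ h / 2) (nhdsWithin 0 (Set.Ioi 0))
      (nhdsWithin 0 (Set.Ioi 0)) := by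
    rw [tendsto_nhdsWithin_iff]
    constructor
    · have hg : Filter.Tendsto (fun h : ℝ => π * Real.sqrt h / 2)
          (nhdsWithin 0 (Set.Ioi 0)) (nhds 0) := by
        have : Filter.Tendsto (fun h : ℝ => π * Real.sqrt h / 2) (nhds 0) (nhds 0) := by
          have := (Real.continuous_sqrt.tendsto 0).const_mul π
          simpa using this.div_const 2
        exact this.mono_left nhdsWithin_le_nhds
      exact squeeze_zero' (eventually_nhdsWithin_of_forall
        (fun x hx => by linarith [(key x hx).1]))
        (eventually_nhdsWithin_of_forall
        (fun x hx => by linarith [(key x hx).2.1])) hg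
    · exact eventually_nhdsWithin_of_forall
        (fun x hx => by simpa using by linarith [(key x hx).1])
  have h1' : Filter.Tendsto (fun h : ℝ => a₀ h / 2) (nhdsWithin 0 (Set.Ioi 0))
      (nhdsWithin 0 {(0:ℝ)}ᶜ) :=
    h1.mono_right (nhdsWithin_mono 0 (fun x hx => ne_of_gt hx))
  have h2 : Filter.Tendsto (fun h : ℝ => Real.tan (a₀ h / 2) / (a₀ h / 2))
      (nhdsWithin 0 (Set.Ioi 0)) (nhds 1) := tan_div_self_tendsto.comp h1'
  have h3 : Filter.Tendsto (fun h : ℝ => (a₀ h / 2) / Real.tan (a₀ h / 2))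
      (nhdsWithin 0 (Set.Ioi 0)) (nhds 1) := by
    have := h2.inv₀ one_ne_zero
    simpa [inv_div] using this
  have h4 : Filter.Tendsto (fun h : ℝ => Real.sqrt ((a₀ h / 2) / Real.tan (a₀ h / 2)))
      (nhdsWithin 0 (Set.Ioi 0)) (nhds 1) := by
    have := (Real.continuous_sqrt.tendsto 1).comp h3
    simpa [Function.comp_def] using this
  refine h4.congr' ?_
  filter_upwards [self_mem_nhdsWithin] with h hh
  rw [Set.mem_Ioi] at hh
  obtain ⟨hane, _, htan⟩ := key h hh
  have h2ph : (0:ℝ) < 2 * π * h := by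
    have := Real.pi_pos; nlinarith
  have htanpos : 0 < Real.tan (a₀ h / 2) := by
    have heq : Real.tan (a₀ h / 2) = h * π / a₀ h := by
      rw [htan]; field_simp
    rw [heq]
    exact div_pos (mul_pos hh Real.pi_pos) hane
  have hval : (a₀ h / 2) / Real.tan (a₀ h / 2) = a₀ h ^ 2 / (2 * π * h) := by
    rw [div_eq_div_iff htanpos.ne' h2ph.ne']
    nlinarith [htan]
  rw [hval, Real.sqrt_div (by positivity), Real.sqrt_sq hane.le]
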